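/- Let H be as above (generators x_i, central generators z_k with [x_i,x_k] = z_k for i < k, z_k linearly independent). Then H is directly indecomposable: if H = A × B then A = {1} or B = {1}. -/

import Mathlib

set_option linter.unusedSectionVars false
namespace S11
open Subgroup Finset
open scoped IsMulCommutative

variable {H : Type*} [Group H]

section kappa
variable (hnil : ∀ a b : H, a⁻¹ * b⁻¹ * a * b ∈ Subgroup.center H)

def kap (g h : H) : Subgroup.center H := ⟨g⁻¹ * h⁻¹ * g * h, hnil g h⟩

lemma kap_coe (g h : H) : (kap hnil g h : H) = g⁻¹ * h⁻¹ * g * h := rfl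

lemma kap_eq_one_of_comm {g h : H} (hc : g * h = h * g) : kap hnil g h = 1 := by
  apply Subtype.ext
  show g⁻¹ * h⁻¹ * g * h = 1
  calc g⁻¹ * h⁻¹ * g * h = g⁻¹ * h⁻¹ * (g * h) := by group
  _ = g⁻¹ * h⁻¹ * (h * g) := by rw [hc]
  _ = 1 := by group

lemma comm_of_kap_eq_one {g h : H} (hk : kap hnil g h = 1) : g * h = h * g := by
  have h1 : g⁻¹ * h⁻¹ * g * h = 1 := congrArg Subtype.val hk
  calc g * h = h * g * (g⁻¹ * h⁻¹ * g * h) := by group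
  _ = h * g := by rw [h1, mul_one]

lemma kap_mul_right (g h k : H) :
    kap hnil g (h * k) = kap hnil g h * kap hnil g k := by
  apply Subtype.ext
  have hu := Subgroup.mem_center_iff.mp (hnil g h)
  show g⁻¹ * (h*k)⁻¹ * g * (h*k) = (g⁻¹*h⁻¹*g*h) * (g⁻¹*k⁻¹*g*k)
  calc g⁻¹ * (h*k)⁻¹ * g * (h*k)
      = g⁻¹*k⁻¹*g*((g⁻¹*h⁻¹*g*h)*k) := by group
    _ = g⁻¹*k⁻¹*g*(k*(g⁻¹*h⁻¹*g*h)) := by rw [← hu k]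
    _ = (g⁻¹*k⁻¹*g*k) * (g⁻¹*h⁻¹*g*h) := by group
    _ = (g⁻¹*h⁻¹*g*h) * (g⁻¹*k⁻¹*g*k) := hu _

lemma kap_antisymm (g h : H) : kap hnil g h = (kap hnil h g)⁻¹ := by
  rw [← inv_inv (kap hnil g h), inv_inj]
  apply Subtype.ext
  rw [Subgroup.coe_inv]
  show (g⁻¹ * h⁻¹ * g * h)⁻¹ = h⁻¹ * g⁻¹ * h * g
  group

/-- right-argument homomorphism -/
def kapR (g : H) : H →* Subgroup.center H :=
  MonoidHom.mk' (fun h => kap hnil g h) (kap_mul_right hnil g)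

lemma kap_mul_left (g k h : H) :
    kap hnil (g * k) h = kap hnil g h * kap hnil k h := by
  rw [kap_antisymm hnil (g*k) h, kap_antisymm hnil g h, kap_antisymm hnil k h,
    kap_mul_right hnil h g k, mul_inv, mul_comm]

/-- left-argument homomorphism -/
def kapL (h : H) : H →* Subgroup.center H :=
  MonoidHom.mk' (fun g => kap hnil g h) (fun g k => kap_mul_left hnil g k h)

lemma kap_zpow_right (g h : H) (m : ℤ) : kap hnil g (h ^ m) = kap hnil g h ^ m :=
  (kapR hnil g).map_zpow h m

lemma kap_zpow_left (g h : H) (m : ℤ) : kap hnil (g ^ m) h = kap hnil g h ^ m :=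
  (kapL hnil h).map_zpow g m

lemma kap_self (g : H) : kap hnil g g = 1 := kap_eq_one_of_comm hnil rfl

lemma kap_right_central {h : H} (hc : h ∈ Subgroup.center H) (g : H) :
    kap hnil g h = 1 :=
  kap_eq_one_of_comm hnil (Subgroup.mem_center_iff.mp hc g)

lemma kap_left_central {g : H} (hc : g ∈ Subgroup.center H) (h : H) :
    kap hnil g h = 1 :=
  kap_eq_one_of_comm hnil (Subgroup.mem_center_iff.mp hc h).symm

lemma kap_one_right (g : H) : kap hnil g 1 = 1 := (kapR hnil g).map_one

lemma kap_inv_right (g h : H) : kap hnil g h⁻¹ = (kap hnil g h)⁻¹ := (kapR hnil g).map_inv h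

end kappa

open Subgroup Finset
variable {H : Type*} [Group H] {ι : Type*}

lemma prod_zpow {G : Type*} [CommGroup G] (u : G) (s : Finset ι) (f : ι → ℤ) :
    ∏ i ∈ s, u ^ f i = u ^ (∑ i ∈ s, f i) := by
  classical
  induction s using Finset.induction with
  | empty => simp
  | insert a s' hns ih => simp [Finset.prod_insert hns, Finset.sum_insert hns, ih, zpow_add]

variable {p : ℕ}

lemma gexp (hexp : ∀ g : H, g ^ p = 1) (g : H) {m : ℤ} (hm : (p:ℤ) ∣ m) : g ^ m = 1 := by
  obtain ⟨q, rfl⟩ := hm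
  rw [zpow_mul, zpow_natCast, hexp, one_zpow]

lemma cexp (hexp : ∀ g : H, g ^ p = 1) (u : Subgroup.center H) {m : ℤ} (hm : (p:ℤ) ∣ m) :
    u ^ m = 1 :=
  Subtype.ext (by rw [SubgroupClass.coe_zpow]; exact gexp hexp _ hm)

lemma cexp_congr (hexp : ∀ g : H, g ^ p = 1) (u : Subgroup.center H) {s t : ℤ}
    (hst : (p:ℤ) ∣ (s - t)) : u ^ s = u ^ t := by
  calc u ^ s = u ^ (t + (s - t)) := by ring_nf
  _ = u ^ t * u ^ (s - t) := zpow_add u t (s-t)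
  _ = u ^ t := by rw [cexp hexp u hst, mul_one]

variable (x z : ℕ → H)

def Xp (c : ℕ → ℤ) : ℕ → H
  | 0 => 1
  | n+1 => Xp c n * x n ^ c n

@[simp] lemma Xp_zero (c : ℕ → ℤ) : Xp x c 0 = 1 := rfl
lemma Xp_succ (c : ℕ → ℤ) (n : ℕ) : Xp x c (n+1) = Xp x c n * x n ^ c n := rfl

lemma Xp_pad {c : ℕ → ℤ} {n : ℕ} (hc : ∀ i, n ≤ i → c i = 0) {m : ℕ} (hm : n ≤ m) :
    Xp x c m = Xp x c n := by
  induction m, hm using Nat.le_induction with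
  | base => rfl
  | succ m hm ih => rw [Xp_succ, hc m hm, zpow_zero, mul_one, ih]

lemma Xp_eq_one {c : ℕ → ℤ} {n : ℕ} (h : ∀ i, i < n → x i ^ c i = 1) : Xp x c n = 1 := by
  induction n with
  | zero => rfl
  | succ n ih =>
    rw [Xp_succ, h n (by omega), mul_one]
    exact ih (fun i hi => h i (by omega))

variable (hnil : ∀ a b : H, a⁻¹ * b⁻¹ * a * b ∈ Subgroup.center H)
variable (hzc : ∀ k : ℕ, 1 ≤ k → z k ∈ Subgroup.center H)

def zeta (k : ℕ) : Subgroup.center H := if h : 1 ≤ k then ⟨z k, hzc k h⟩ else 1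

lemma zeta_coe {k : ℕ} (hk : 1 ≤ k) : (zeta z hzc k : H) = z k := by
  rw [zeta, dif_pos hk]

lemma zeta_zero : zeta z hzc 0 = 1 := by rw [zeta, dif_neg (by omega)]



lemma kap_Xp (c : ℕ → ℤ) (n : ℕ) (w : H) :
    kap hnil (Xp x c n) w = ∏ i ∈ Finset.range n, kap hnil (x i) w ^ c i := by
  induction n with
  | zero => simp [kap_left_central hnil (Subgroup.one_mem _)]
  | succ n ih =>
    rw [Xp_succ, kap_mul_left, ih, Finset.prod_range_succ, kap_zpow_left]

variable (hrel : ∀ i k : ℕ, i < k → (x i)⁻¹ * (x k)⁻¹ * x i * x k = z k)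
include hrel

lemma kap_x_lt {i k : ℕ} (hik : i < k) :
    kap hnil (x i) (x k) = zeta z hzc k :=
  Subtype.ext (by rw [zeta_coe _ _ (by omega)]; exact hrel i k hik)

lemma kap_x_gt {i k : ℕ} (hik : k < i) :
    kap hnil (x i) (x k) = (zeta z hzc i)⁻¹ := by
  rw [kap_antisymm, kap_x_lt x z hnil hzc hrel hik]


lemma key (c : ℕ → ℤ) {k n : ℕ} (hk : k < n) :
    kap hnil (Xp x c n) (x k) =
      zeta z hzc k ^ (∑ i ∈ Finset.range k, c i) *
        ∏ j ∈ Finset.Ico (k+1) n, zeta z hzc j ^ (-c j) := by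
  rw [kap_Xp x hnil, Finset.range_eq_Ico,
    ← Finset.prod_Ico_consecutive _ (Nat.zero_le k) (le_of_lt hk)]
  congr 1
  · rw [← Finset.range_eq_Ico]
    rw [Finset.prod_congr rfl (fun i hi => by
      rw [kap_x_lt x z hnil hzc hrel (Finset.mem_range.mp hi)])]
    exact prod_zpow _ _ _
  · rw [Finset.prod_eq_prod_Ico_succ_bot hk, kap_self, one_zpow, one_mul]
    exact Finset.prod_congr rfl (fun j hj => by
      rw [kap_x_gt x z hnil hzc hrel (Finset.mem_Ico.mp hj).1, inv_zpow, ← zpow_neg])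


variable {p : ℕ}
variable (hindep : ∀ (n : ℕ) (c : Fin n → ℤ),
      (List.ofFn fun k : Fin n => z (k + 1) ^ c k).prod = 1 →
      ∀ k : Fin n, (p : ℤ) ∣ c k)
include hindep

lemma indep_master (e : ℕ → ℤ) (n : ℕ)
    (h1 : ∏ j ∈ Finset.Ico 1 (n+1), zeta z hzc j ^ e j = 1) :
    ∀ j, 1 ≤ j → j < n+1 → (p:ℤ) ∣ e j := by
  have l1 : (List.ofFn fun k : Fin n => z (k + 1) ^ e (k+1))
      = List.map (Subgroup.center H).subtype
          (List.ofFn fun k : Fin n => zeta z hzc (k+1) ^ e (k+1)) := by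
    rw [List.map_ofFn]
    congr 1
  have l2 : (List.ofFn fun k : Fin n => zeta z hzc (k+1) ^ e (k+1)).prod
      = ∏ j ∈ Finset.Ico 1 (n+1), zeta z hzc j ^ e j := by
    rw [List.prod_ofFn, Fin.prod_univ_eq_prod_range (fun i => zeta z hzc (i+1) ^ e (i+1)) n,
      Finset.prod_Ico_eq_prod_range]
    simp [add_comm]
  have l3 : (List.ofFn fun k : Fin n => z (k + 1) ^ e (k+1)).prod = 1 := by
    rw [l1, List.prod_hom _ (Subgroup.center H).subtype, l2, h1, map_one]
  intro j hj1 hj2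
  have := hindep n (fun k => e (k+1)) l3 ⟨j-1, by omega⟩
  simpa [Nat.sub_add_cancel hj1] using this

omit hindep

lemma conv (S : ℤ) (c : ℕ → ℤ) {k n : ℕ} (hk : k < n) :
    zeta z hzc k ^ S * ∏ j ∈ Finset.Ico (k+1) n, zeta z hzc j ^ (-c j)
      = ∏ j ∈ Finset.Ico 1 n, zeta z hzc j ^ (if j = k then S else if k < j then -(c j) else 0) := by
  rcases Nat.eq_zero_or_pos k with hk0 | hk1
  · subst hk0
    rw [zeta_zero, one_zpow, one_mul]
    symm
    apply Finset.prod_congr rfl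
    intro j hj
    have hm := Finset.mem_Ico.mp hj
    rw [if_neg (by omega), if_pos (by omega)]
  · symm
    rw [← Finset.prod_Ico_consecutive _ hk1 (le_of_lt hk),
      Finset.prod_eq_prod_Ico_succ_bot hk]
    have h2 : ∏ j ∈ Finset.Ico 1 k,
        zeta z hzc j ^ (if j = k then S else if k < j then -(c j) else 0) = 1 :=
      Finset.prod_eq_one (fun j hj => by
        have hm := Finset.mem_Ico.mp hj
        rw [if_neg (by omega), if_neg (by omega), zpow_zero])
    rw [h2, one_mul, if_pos rfl]
    congr 1
    apply Finset.prod_congr rfl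
    intro j hj
    have hm := Finset.mem_Ico.mp hj
    rw [if_neg (by omega), if_pos (by omega)]

include hindep

lemma indep1 {k : ℕ} (hk : 1 ≤ k) {m : ℤ} (h1 : zeta z hzc k ^ m = 1) : (p:ℤ) ∣ m := by
  have hP : ∏ j ∈ Finset.Ico 1 (k+1), zeta z hzc j ^ (if j = k then m else 0) = 1 := by
    rw [Finset.prod_eq_single_of_mem k (Finset.mem_Ico.mpr ⟨hk, by omega⟩)
      (fun j _ hjk => by rw [if_neg hjk, zpow_zero])]
    rw [if_pos rfl]; exact h1
  have := indep_master x z hzc hrel hindep _ k hP k hk (by omega)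
  simpa using this


omit hindep
omit hrel

include hzc

def NN (z : ℕ → H) : Subgroup H := Subgroup.closure (Set.range fun k => z (k + 1))

lemma NN_le_center : NN z ≤ Subgroup.center H :=
  (Subgroup.closure_le _).mpr (by rintro _ ⟨k, rfl⟩; exact hzc (k+1) (by omega))

lemma z_mem_NN {k : ℕ} (hk : 1 ≤ k) : z k ∈ NN z := by
  obtain ⟨k', rfl⟩ : ∃ k', k = k' + 1 := ⟨k - 1, by omega⟩
  exact Subgroup.subset_closure ⟨k', rfl⟩

lemma zeta_zpow_mem_NN (k : ℕ) (m : ℤ) : ((zeta z hzc k ^ m : Subgroup.center H) : H) ∈ NN z := by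
  rcases Nat.eq_zero_or_pos k with h0 | h1
  · subst h0; rw [zeta_zero, one_zpow, OneMemClass.coe_one]; exact one_mem _
  · rw [SubgroupClass.coe_zpow, zeta_coe z hzc h1]
    exact zpow_mem (z_mem_NN z hzc h1) m

omit hzc
lemma cen_conj {w g : H} (hw : w ∈ Subgroup.center H) : g⁻¹ * w * g = w := by
  rw [mul_assoc, ← Subgroup.mem_center_iff.mp hw g, ← mul_assoc, inv_mul_cancel, one_mul]

lemma cen_conj' {w g : H} (hw : w ∈ Subgroup.center H) : g * w * g⁻¹ = w := by
  have := cen_conj (g := g⁻¹) hw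
  rwa [inv_inv] at this

lemma mul_swap (g h : H) : g * h = h * g * ↑(kap hnil g h) := by
  rw [kap_coe]; group

include hnil hzc hrel

lemma kap_xe_Xp (e : ℤ) (c : ℕ → ℤ) (n : ℕ) :
    kap hnil (x n ^ e) (Xp x c n) = zeta z hzc n ^ (-(e * ∑ i ∈ Finset.range n, c i)) := by
  have h1 : kap hnil (Xp x c n) (x n) = zeta z hzc n ^ (∑ i ∈ Finset.range n, c i) := by
    rw [kap_Xp x hnil]
    rw [Finset.prod_congr rfl (fun i hi => by
      rw [kap_x_lt x z hnil hzc hrel (Finset.mem_range.mp hi)])]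
    exact prod_zpow _ _ _
  rw [kap_antisymm, kap_zpow_right, h1, ← zpow_mul, ← zpow_neg]
  congr 1
  ring

lemma Xp_mul (c c' : ℕ → ℤ) (n : ℕ) :
    ∃ μ ∈ NN z, Xp x c n * Xp x c' n = Xp x (fun j => c j + c' j) n * μ := by
  induction n with
  | zero => exact ⟨1, one_mem _, by simp⟩
  | succ n ih =>
    obtain ⟨μ, hμ, he⟩ := ih
    set τ : H := ((zeta z hzc n ^ (-(c n * ∑ i ∈ Finset.range n, c' i)) : Subgroup.center H) : H) with hτdef
    have hτ : τ ∈ NN z := zeta_zpow_mem_NN z hzc _ _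
    have hswap : x n ^ c n * Xp x c' n = Xp x c' n * x n ^ c n * τ := by
      rw [mul_swap hnil (x n ^ c n) (Xp x c' n), kap_xe_Xp x z hnil hzc hrel]
    have hμc := Subgroup.mem_center_iff.mp (NN_le_center z hzc hμ)
    have hτc := Subgroup.mem_center_iff.mp (NN_le_center z hzc hτ)
    refine ⟨μ * τ, mul_mem hμ hτ, ?_⟩
    calc Xp x c (n+1) * Xp x c' (n+1)
        = Xp x c n * (x n ^ c n * Xp x c' n) * x n ^ c' n := by
          rw [Xp_succ, Xp_succ]; group
      _ = Xp x c n * (Xp x c' n * x n ^ c n * τ) * x n ^ c' n := by rw [hswap]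
      _ = (Xp x c n * Xp x c' n) * (x n ^ c n * (τ * x n ^ c' n)) := by group
      _ = (Xp x c n * Xp x c' n) * (x n ^ c n * (x n ^ c' n * τ)) := by rw [← hτc]
      _ = (Xp x c n * Xp x c' n) * (x n ^ c n * x n ^ c' n) * τ := by group
      _ = (Xp x (fun j => c j + c' j) n * μ) * (x n ^ c n * x n ^ c' n) * τ := by rw [he]
      _ = (Xp x (fun j => c j + c' j) n * (μ * x n ^ (c n + c' n))) * τ := by
          rw [zpow_add]; group
      _ = (Xp x (fun j => c j + c' j) n * (x n ^ (c n + c' n) * μ)) * τ := by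
          rw [← hμc (x n ^ (c n + c' n))]
      _ = Xp x (fun j => c j + c' j) (n+1) * (μ * τ) := by rw [Xp_succ]; group

variable (hgen : Subgroup.closure (Set.range x ∪ Set.range (fun k => z (k + 1))) = ⊤)
include hgen

lemma rep (h : H) : ∃ (n : ℕ) (c : ℕ → ℤ),
    (∀ i, n ≤ i → c i = 0) ∧ h * (Xp x c n)⁻¹ ∈ NN z := by
  have hh : h ∈ Subgroup.closure (Set.range x ∪ Set.range fun k => z (k+1)) := by
    rw [hgen]; trivial
  induction hh using Subgroup.closure_induction with
  | mem s hs =>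
    rcases hs with ⟨i, rfl⟩ | ⟨k, rfl⟩
    · refine ⟨i+1, fun j => if j = i then 1 else 0, fun j hj => if_neg (by omega), ?_⟩
      have h1 : Xp x (fun j => if j = i then (1:ℤ) else 0) i = 1 :=
        Xp_eq_one x (fun j hj => by rw [if_neg (by omega), zpow_zero])
      rw [Xp_succ, h1, if_pos rfl, zpow_one, one_mul, mul_inv_cancel]
      exact one_mem _
    · exact ⟨0, 0, fun j _ => rfl, by simpa using z_mem_NN z hzc (k := k+1) (by omega)⟩
  | one => exact ⟨0, 0, fun j _ => rfl, by simpa using one_mem (NN z)⟩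
  | mul a b _ _ iha ihb =>
    obtain ⟨n, c, hc0, hcN⟩ := iha
    obtain ⟨n', c', hc0', hcN'⟩ := ihb
    set M := max n n' with hM
    have hXc : Xp x c M = Xp x c n := Xp_pad x hc0 (le_max_left _ _)
    have hXc' : Xp x c' M = Xp x c' n' := Xp_pad x hc0' (le_max_right _ _)
    obtain ⟨μ, hμ, hmul⟩ := Xp_mul x z hnil hzc hrel c c' M
    set ν := a * (Xp x c n)⁻¹ with hν
    set ν' := b * (Xp x c' n')⁻¹ with hν'
    have ha : a = ν * Xp x c n := by rw [hν]; group
    have hb : b = ν' * Xp x c' n' := by rw [hν']; group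
    have hνc := Subgroup.mem_center_iff.mp (NN_le_center z hzc hcN)
    have hν'c := Subgroup.mem_center_iff.mp (NN_le_center z hzc hcN')
    have hμc := Subgroup.mem_center_iff.mp (NN_le_center z hzc hμ)
    refine ⟨M, fun j => c j + c' j, fun j hj => by
      show c j + c' j = 0
      rw [hc0 j (le_trans (le_max_left _ _) hj), hc0' j (le_trans (le_max_right _ _) hj), add_zero], ?_⟩
    have : a * b = ν * ν' * (Xp x (fun j => c j + c' j) M) * μ := by
      calc a * b = ν * (Xp x c M * ν') * Xp x c' M := by
            rw [ha, hb, hXc, hXc']; group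
        _ = ν * (ν' * Xp x c M) * Xp x c' M := by rw [hν'c]
        _ = ν * ν' * (Xp x c M * Xp x c' M) := by group
        _ = ν * ν' * (Xp x (fun j => c j + c' j) M) * μ := by rw [hmul]; group
    rw [this]
    have h9 : ν * ν' * Xp x (fun j => c j + c' j) M * μ * (Xp x (fun j => c j + c' j) M)⁻¹
        = ν * ν' * (Xp x (fun j => c j + c' j) M * μ * (Xp x (fun j => c j + c' j) M)⁻¹) := by
      group
    rw [h9, cen_conj' (NN_le_center z hzc hμ)]
    exact mul_mem (mul_mem hcN hcN') hμ
  | inv a _ iha =>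
    obtain ⟨n, c, hc0, hcN⟩ := iha
    obtain ⟨μ, hμ, hmul⟩ := Xp_mul x z hnil hzc hrel c (fun j => -(c j)) n
    have h0 : Xp x (fun j => c j + -(c j)) n = 1 :=
      Xp_eq_one x (fun j hj => by rw [add_neg_cancel, zpow_zero])
    rw [h0, one_mul] at hmul
    set ν := a * (Xp x c n)⁻¹ with hν
    have ha : a = ν * Xp x c n := by rw [hν]; group
    have hνc := Subgroup.mem_center_iff.mp (NN_le_center z hzc hcN)
    have hμc := Subgroup.mem_center_iff.mp (NN_le_center z hzc hμ)
    refine ⟨n, fun j => -(c j), fun j hj => by show -(c j) = 0; rw [hc0 j hj, neg_zero], ?_⟩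
    have hXinv : (Xp x (fun j => -(c j)) n)⁻¹ = μ⁻¹ * Xp x c n := by
      rw [← hmul]; group
    have : a⁻¹ * (Xp x (fun j => -(c j)) n)⁻¹ = (Xp x c n)⁻¹ * (ν⁻¹ * μ⁻¹) * Xp x c n := by
      rw [hXinv, ha]; group
    rw [this, cen_conj (mul_mem (inv_mem (NN_le_center z hzc hcN)) (inv_mem (NN_le_center z hzc hμ)))]
    exact mul_mem (inv_mem hcN) (inv_mem hμ)


variable (hexp : ∀ g : H, g ^ p = 1)

omit hgen

lemma kap_eq_of_rep {h : H} {n : ℕ} {c : ℕ → ℤ}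
    (hN : h * (Xp x c n)⁻¹ ∈ NN z) (w : H) :
    kap hnil h w = kap hnil (Xp x c n) w := by
  have ha : h = (h * (Xp x c n)⁻¹) * Xp x c n := by group
  rw [ha, kap_mul_left, kap_left_central hnil (NN_le_center z hzc hN), one_mul]

include hindep hexp

lemma lema {h : H} {n : ℕ} {c : ℕ → ℤ} {m : ℕ}
    (hc0 : ∀ i, n ≤ i → c i = 0) (hN : h * (Xp x c n)⁻¹ ∈ NN z)
    (h1 : kap hnil h (x m) = 1) :
    ((p:ℤ) ∣ ∑ i ∈ Finset.range m, c i) ∧ (∀ j, m < j → (p:ℤ) ∣ c j) ∧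
      (∀ k, m < k → kap hnil h (x k) = zeta z hzc k ^ c m) := by
  have hkap : ∀ w, kap hnil h w = kap hnil (Xp x c n) w :=
    kap_eq_of_rep x z hnil hzc hrel hN
  -- first: divisibilities
  set n1 := max n (m+1) with hn1
  have hm1 : m < n1 := lt_of_lt_of_le (Nat.lt_succ_self m) (le_max_right _ _)
  have hnn1 : n ≤ n1 := le_max_left _ _
  have hpad : Xp x c n1 = Xp x c n := Xp_pad x hc0 hnn1
  have e1 := key x z hnil hzc hrel c hm1
  rw [hpad, ← hkap (x m), h1] at e1
  have e2 : ∏ j ∈ Finset.Ico 1 n1, zeta z hzc j ^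
      (if j = m then (∑ i ∈ Finset.range m, c i) else if m < j then -(c j) else 0) = 1 := by
    rw [← conv x z hzc hrel _ c hm1, ← e1]
  obtain ⟨n2, hn2⟩ : ∃ n2, n1 = n2 + 1 := ⟨n1 - 1, by omega⟩
  rw [hn2] at e2
  have hdiv := indep_master x z hzc hrel hindep _ n2 e2
  rw [← hn2] at hdiv
  have hSm : (p:ℤ) ∣ ∑ i ∈ Finset.range m, c i := by
    rcases Nat.eq_zero_or_pos m with h0 | h0
    · subst h0; simp
    · have := hdiv m h0 hm1
      rwa [if_pos rfl] at this
  have hcj : ∀ j, m < j → (p:ℤ) ∣ c j := by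
    intro j hj
    rcases lt_or_ge j n1 with hjn | hjn
    · have := hdiv j (by omega) hjn
      rw [if_neg (by omega), if_pos hj] at this
      exact (dvd_neg).mp this
    · rw [hc0 j (by omega)]
      exact dvd_zero _
  refine ⟨hSm, hcj, ?_⟩
  intro k hk
  set n3 := max n (k+1) with hn3
  have hk3 : k < n3 := lt_of_lt_of_le (Nat.lt_succ_self k) (le_max_right _ _)
  have hpad3 : Xp x c n3 = Xp x c n := Xp_pad x hc0 (le_max_left _ _)
  have e3 := key x z hnil hzc hrel c hk3
  rw [hpad3, ← hkap (x k)] at e3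
  have etail : ∏ j ∈ Finset.Ico (k+1) n3, zeta z hzc j ^ (-c j) = 1 :=
    Finset.prod_eq_one (fun j hj => by
      have hm2 := Finset.mem_Ico.mp hj
      exact cexp hexp _ (dvd_neg.mpr (hcj j (by omega))))
  have hsplit : ∑ i ∈ Finset.range k, c i =
      (∑ i ∈ Finset.range m, c i) + (c m + ∑ i ∈ Finset.Ico (m+1) k, c i) := by
    rw [Finset.range_eq_Ico, ← Finset.sum_Ico_consecutive _ (Nat.zero_le m) (le_of_lt hk),
      Finset.sum_eq_sum_Ico_succ_bot hk, ← Finset.range_eq_Ico]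
  have hhead : zeta z hzc k ^ (∑ i ∈ Finset.range k, c i) = zeta z hzc k ^ c m := by
    apply cexp_congr hexp
    have hd : ∑ i ∈ Finset.range k, c i - c m =
        (∑ i ∈ Finset.range m, c i) + ∑ i ∈ Finset.Ico (m+1) k, c i := by
      rw [hsplit]; ring
    rw [hd]
    exact dvd_add hSm (Finset.dvd_sum (fun i hi => hcj i (Finset.mem_Ico.mp hi).1))
  rw [e3, etail, mul_one, hhead]

lemma lema2 {h : H} {n : ℕ} {c : ℕ → ℤ}
    (hc0 : ∀ i, n ≤ i → c i = 0) (hN : h * (Xp x c n)⁻¹ ∈ NN z)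
    (h1 : kap hnil h (x 1) = 1) :
    kap hnil h (x 0) = zeta z hzc 1 ^ (-(c 1)) := by
  obtain ⟨_, hcj, _⟩ := lema x z hnil hzc hrel hindep hexp hc0 hN h1
  have hkap : ∀ w, kap hnil h w = kap hnil (Xp x c n) w :=
    kap_eq_of_rep x z hnil hzc hrel hN
  set n3 := max n 2 with hn3
  have h03 : 0 < n3 := by positivity
  have h13 : 1 < n3 := lt_of_lt_of_le one_lt_two (le_max_right _ _)
  have hpad3 : Xp x c n3 = Xp x c n := Xp_pad x hc0 (le_max_left _ _)
  have e3 := key x z hnil hzc hrel c h03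
  rw [hpad3, ← hkap (x 0)] at e3
  have etail : ∏ j ∈ Finset.Ico 2 n3, zeta z hzc j ^ (-c j) = 1 :=
    Finset.prod_eq_one (fun j hj => by
      have hm2 := Finset.mem_Ico.mp hj
      exact cexp hexp _ (dvd_neg.mpr (hcj j (by omega))))
  rw [e3, Finset.prod_eq_prod_Ico_succ_bot h13, etail, mul_one]
  simp

omit hindep hexp
include hgen

lemma central_of_kap {g : H}
    (h1 : ∀ i, kap hnil g (x i) = 1) (h2 : ∀ k, kap hnil g (z (k+1)) = 1) :
    g ∈ Subgroup.center H := by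
  have hle : Subgroup.closure (Set.range x ∪ Set.range fun k => z (k+1)) ≤ (kapR hnil g).ker := by
    apply (Subgroup.closure_le _).mpr
    rintro s (⟨i, rfl⟩ | ⟨k, rfl⟩)
    · show _ ∈ (kapR hnil g).ker
      rw [MonoidHom.mem_ker]; exact h1 i
    · show _ ∈ (kapR hnil g).ker
      rw [MonoidHom.mem_ker]; exact h2 k
  rw [Subgroup.mem_center_iff]
  intro w
  have hw : w ∈ (⊤ : Subgroup H) := trivial
  rw [← hgen] at hw
  have hker := hle hw
  rw [MonoidHom.mem_ker] at hker
  exact (comm_of_kap_eq_one hnil hker).symm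

include hindep hexp

lemma mem_NN_of_kap_trivial (h : H) (hk : ∀ k, kap hnil h (x k) = 1) : h ∈ NN z := by
  obtain ⟨n, c, hc0, hN⟩ := rep x z hnil hzc hrel hgen h
  obtain ⟨_, hcj0, _⟩ := lema x z hnil hzc hrel hindep hexp (m := 0) hc0 hN (hk 0)
  obtain ⟨hS1, _, _⟩ := lema x z hnil hzc hrel hindep hexp (m := 1) hc0 hN (hk 1)
  rw [Finset.sum_range_one] at hS1
  have hXp1 : Xp x c n = 1 := Xp_eq_one x (fun i hi => by
    rcases Nat.eq_zero_or_pos i with h0 | h0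
    · subst h0; exact gexp hexp _ hS1
    · exact gexp hexp _ (hcj0 i h0))
  rw [hXp1] at hN
  simpa using hN


lemma endgame (A B : Subgroup H)
    (hcomm : ∀ a ∈ A, ∀ b ∈ B, a * b = b * a)
    (a b : ℕ → H) (ha : ∀ m, a m ∈ A) (hb : ∀ m, b m ∈ B) (hab : ∀ m, x m = a m * b m)
    (lam : ℕ → ℤ)
    (hlam : ∀ m k, m < k → kap hnil (a m) (x k) = zeta z hzc k ^ lam m)
    (hdvd : ∀ m, (p:ℤ) ∣ lam m) : B = ⊤ := by
  have hab1 : ∀ i j, kap hnil (a i) (b j) = 1 := fun i j =>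
    kap_eq_one_of_comm hnil (hcomm _ (ha i) _ (hb j))
  have hba1 : ∀ i j, kap hnil (b i) (a j) = 1 := fun i j =>
    kap_eq_one_of_comm hnil (hcomm _ (ha j) _ (hb i)).symm
  have hsplit : ∀ g k, kap hnil g (x k) = kap hnil g (a k) * kap hnil g (b k) :=
    fun g k => by rw [hab k, kap_mul_right]
  have hAzero : ∀ m k, kap hnil (a m) (x k) = 1 := by
    intro m k
    rcases lt_trichotomy m k with h | h | h
    · rw [hlam m k h]; exact cexp hexp _ (hdvd m)
    · subst h; rw [hsplit, hab1, mul_one, kap_self]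
    · rw [hsplit, hab1, mul_one]
      have h2 : kap hnil (a k) (a m) = 1 := by
        have h3 := hlam k m h
        rw [hsplit, hab1, mul_one] at h3
        rw [h3]; exact cexp hexp _ (hdvd k)
      rw [kap_antisymm, h2, inv_one]
  have hAcent : ∀ m, a m ∈ Subgroup.center H := fun m =>
    central_of_kap x z hnil hzc hrel hgen (fun i => hAzero m i)
      (fun k => kap_right_central hnil (hzc (k+1) (by omega)) _)
  have hzB : ∀ k, 1 ≤ k → z k ∈ B := by
    intro k hk
    have h1 : kap hnil (x 0) (x k) = zeta z hzc k := kap_x_lt x z hnil hzc hrel (by omega)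
    have h2 : kap hnil (x 0) (x k) = kap hnil (a 0) (x k) * kap hnil (b 0) (x k) := by
      rw [hab 0, kap_mul_left]
    have h3 : kap hnil (b 0) (x k) = zeta z hzc k := by
      rw [← h1, h2, hAzero, one_mul]
    have h4 : kap hnil (b 0) (b k) = zeta z hzc k := by
      rw [← h3, hsplit, hba1, one_mul]
    have h5 : z k = (b 0)⁻¹ * (b k)⁻¹ * (b 0) * (b k) := by
      have h6 := congrArg Subtype.val h4
      rw [kap_coe, zeta_coe z hzc hk] at h6
      exact h6.symm
    rw [h5]
    exact mul_mem (mul_mem (mul_mem (inv_mem (hb 0)) (inv_mem (hb k))) (hb 0)) (hb k)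
  have hNB : NN z ≤ B := (Subgroup.closure_le _).mpr
    (by rintro _ ⟨k, rfl⟩; exact hzB (k+1) (by omega))
  have hxB : ∀ m, x m ∈ B := by
    intro m
    have haN : a m ∈ NN z :=
      mem_NN_of_kap_trivial x z hnil hzc hrel hindep hgen hexp (a m) (fun k => hAzero m k)
    rw [hab m]
    exact mul_mem (hNB haN) (hb m)
  have hle : Subgroup.closure (Set.range x ∪ Set.range fun k => z (k+1)) ≤ B :=
    (Subgroup.closure_le _).mpr
      (by rintro s (⟨i, rfl⟩ | ⟨k, rfl⟩); exacts [hxB i, hzB (k+1) (by omega)])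
  rw [hgen] at hle
  exact eq_top_iff.mpr hle

end S11

open S11

/-- Let `H` be the group in the variety of exponent-`p`, class-2 nilpotent groups
with generators `x_i` and central generators `z_k` (`k ≥ 1`), `[x_i, x_k] = z_k`
for `i < k`, the `z_k` linearly independent over `ℤ/pℤ`. Then `H` is directly
indecomposable: if `H = A × B` (internal direct product) then `A = {1}` or
`B = {1}`. -/
theorem stmt11 {p : ℕ} (hp : p.Prime) (hodd : Odd p) {H : Type*} [Group H]
    (hexp : ∀ g : H, g ^ p = 1)
    (hnil : ∀ a b : H, a⁻¹ * b⁻¹ * a * b ∈ Subgroup.center H)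
    (x z : ℕ → H)
    (hrel : ∀ i k : ℕ, i < k → (x i)⁻¹ * (x k)⁻¹ * x i * x k = z k)
    (hzc : ∀ k : ℕ, 1 ≤ k → z k ∈ Subgroup.center H)
    (hgen : Subgroup.closure (Set.range x ∪ Set.range (fun k => z (k + 1))) = ⊤)
    (hindep : ∀ (n : ℕ) (c : Fin n → ℤ),
      (List.ofFn fun k : Fin n => z (k + 1) ^ c k).prod = 1 →
      ∀ k : Fin n, (p : ℤ) ∣ c k)
    (A B : Subgroup H) [A.Normal] [B.Normal]
    (hmeet : A ⊓ B = ⊥) (hjoin : A ⊔ B = ⊤)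
    (hcomm : ∀ a ∈ A, ∀ b ∈ B, a * b = b * a) :
    A = ⊥ ∨ B = ⊥ := by
  classical
  have hchoice : ∀ m : ℕ, ∃ am ∈ A, ∃ bm ∈ B, am * bm = x m := by
    intro m
    have hx : x m ∈ A ⊔ B := by rw [hjoin]; trivial
    rw [← SetLike.mem_coe, Subgroup.mul_normal A B] at hx
    exact hx
  choose a ha b hb hab' using hchoice
  have hab : ∀ m, x m = a m * b m := fun m => (hab' m).symm
  choose n c hc0 hN using fun m => rep x z hnil hzc hrel hgen (a m)
  have hsplit : ∀ g k, kap hnil g (x k) = kap hnil g (a k) * kap hnil g (b k) :=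
    fun g k => by rw [hab k, kap_mul_right]
  have hab1 : ∀ i j, kap hnil (a i) (b j) = 1 := fun i j =>
    kap_eq_one_of_comm hnil (hcomm _ (ha i) _ (hb j))
  have hba1 : ∀ i j, kap hnil (b i) (a j) = 1 := fun i j =>
    kap_eq_one_of_comm hnil (hcomm _ (ha j) _ (hb i)).symm
  have hone : ∀ m, kap hnil (a m) (x m) = 1 := fun m => by
    rw [hsplit, hab1, mul_one, kap_self]
  set lam : ℕ → ℤ := fun m => c m m with hlamdef
  have hlam : ∀ m k, m < k → kap hnil (a m) (x k) = zeta z hzc k ^ lam m := fun m k hk =>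
    (lema x z hnil hzc hrel hindep hexp (hc0 m) (hN m) (hone m)).2.2 k hk
  have hblam : ∀ m k, m < k → kap hnil (b m) (x k) = zeta z hzc k ^ (1 - lam m) := by
    intro m k hk
    have h1 : kap hnil (x m) (x k) = zeta z hzc k := kap_x_lt x z hnil hzc hrel hk
    have h2 : kap hnil (x m) (x k) = kap hnil (a m) (x k) * kap hnil (b m) (x k) := by
      rw [hab m, kap_mul_left]
    rw [hlam m k hk] at h2
    have h3 : zeta z hzc k ^ lam m * kap hnil (b m) (x k) = zeta z hzc k := h2.symm.trans h1
    have h4 : kap hnil (b m) (x k) = (zeta z hzc k ^ lam m)⁻¹ * zeta z hzc k :=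
      eq_inv_mul_iff_mul_eq.mpr h3
    rw [h4, ← zpow_neg, show (1:ℤ) - lam m = -lam m + 1 from by ring, zpow_add_one]
  have kapmemA : ∀ i j, ((kap hnil (a i) (a j) : Subgroup.center H) : H) ∈ A := fun i j => by
    rw [kap_coe]
    exact mul_mem (mul_mem (mul_mem (inv_mem (ha i)) (inv_mem (ha j))) (ha i)) (ha j)
  have kapmemB : ∀ i j, ((kap hnil (b i) (b j) : Subgroup.center H) : H) ∈ B := fun i j => by
    rw [kap_coe]
    exact mul_mem (mul_mem (mul_mem (inv_mem (hb i)) (inv_mem (hb j))) (hb i)) (hb j)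
  have hcoh : ∀ m, (p:ℤ) ∣ lam m - lam 0 := by
    intro m
    set k := m + 1 with hkdef
    have hKAm : kap hnil (a m) (a k) = zeta z hzc k ^ lam m := by
      have h4 := hlam m k (by omega); rwa [hsplit, hab1, mul_one] at h4
    have hKA0 : kap hnil (a 0) (a k) = zeta z hzc k ^ lam 0 := by
      have h4 := hlam 0 k (by omega); rwa [hsplit, hab1, mul_one] at h4
    have hKBm : kap hnil (b m) (b k) = zeta z hzc k ^ (1 - lam m) := by
      have h4 := hblam m k (by omega); rwa [hsplit, hba1, one_mul] at h4
    have hKB0 : kap hnil (b 0) (b k) = zeta z hzc k ^ (1 - lam 0) := by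
      have h4 := hblam 0 k (by omega); rwa [hsplit, hba1, one_mul] at h4
    have hAeq : zeta z hzc k ^ (lam m - lam 0) =
        kap hnil (a m) (a k) * (kap hnil (a 0) (a k))⁻¹ := by
      rw [show lam m - lam 0 = lam m + -lam 0 from by ring, zpow_add, zpow_neg,
        ← hKAm, ← hKA0]
    have hBeq : zeta z hzc k ^ (lam m - lam 0) =
        kap hnil (b 0) (b k) * (kap hnil (b m) (b k))⁻¹ := by
      rw [show lam m - lam 0 = (1 - lam 0) + -(1 - lam m) from by ring, zpow_add, zpow_neg,
        ← hKB0, ← hKBm]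
    have hmemA : ((zeta z hzc k ^ (lam m - lam 0) : Subgroup.center H) : H) ∈ A := by
      rw [hAeq, Subgroup.coe_mul, Subgroup.coe_inv]
      exact mul_mem (kapmemA m k) (inv_mem (kapmemA 0 k))
    have hmemB : ((zeta z hzc k ^ (lam m - lam 0) : Subgroup.center H) : H) ∈ B := by
      rw [hBeq, Subgroup.coe_mul, Subgroup.coe_inv]
      exact mul_mem (kapmemB 0 k) (inv_mem (kapmemB m k))
    have hbot : ((zeta z hzc k ^ (lam m - lam 0) : Subgroup.center H) : H) ∈ A ⊓ B :=
      ⟨hmemA, hmemB⟩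
    rw [hmeet, Subgroup.mem_bot] at hbot
    have hz1 : zeta z hzc k ^ (lam m - lam 0) = 1 := Subtype.ext hbot
    exact indep1 x z hzc hrel hindep (by omega) hz1
  -- dichotomy
  have hlam1x0 : kap hnil (a 1) (x 0) = zeta z hzc 1 ^ (-(lam 1)) := by
    have h5 : kap hnil (a 1) (x 0) = zeta z hzc 1 ^ (-(c 1 1)) :=
      lema2 x z hnil hzc hrel hindep hexp (hc0 1) (hN 1) (hone 1)
    exact h5
  set g : H := a 1 * (x 1) ^ (-(lam 1)) with hgdef
  have hgc : g ∈ Subgroup.center H := by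
    apply central_of_kap x z hnil hzc hrel hgen
    · intro i
      have hsplitg : kap hnil g (x i) =
          kap hnil (a 1) (x i) * (kap hnil (x 1) (x i)) ^ (-(lam 1)) := by
        rw [hgdef, kap_mul_left, kap_zpow_left]
      rcases lt_trichotomy i 1 with hi | hi | hi
      · have hi0 : i = 0 := by omega
        subst hi0
        rw [hsplitg, hlam1x0, kap_x_gt x z hnil hzc hrel (by omega)]
        group
      · subst hi
        simp [hsplitg, hone 1, kap_self]
      · rw [hsplitg, hlam 1 i hi, kap_x_lt x z hnil hzc hrel hi]
        group
    · exact fun k => kap_right_central hnil (hzc (k+1) (by omega)) _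
  have w1 : kap hnil (a 0) (a 1) = zeta z hzc 1 ^ lam 0 := by
    have h4 := hlam 0 1 (by omega); rwa [hsplit, hab1, mul_one] at h4
  have w2 : a 1 = g * x 1 ^ (lam 1) := by rw [hgdef]; group
  have w3 : kap hnil (a 0) (a 1) = zeta z hzc 1 ^ (lam 0 * lam 1) := by
    rw [w2, kap_mul_right, kap_right_central hnil hgc, one_mul, kap_zpow_right,
      hlam 0 1 (by omega), ← zpow_mul]
  have hz1 : zeta z hzc 1 ^ (lam 0 * lam 1 - lam 0) = 1 := by
    rw [zpow_sub, ← w3, ← w1, mul_inv_cancel]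
  have hd1 : (p:ℤ) ∣ lam 0 * lam 1 - lam 0 := indep1 x z hzc hrel hindep (le_refl 1) hz1
  have hd2 : (p:ℤ) ∣ lam 0 * lam 1 - lam 0 * lam 0 := by
    have he : lam 0 * lam 1 - lam 0 * lam 0 = lam 0 * (lam 1 - lam 0) := by ring
    rw [he]
    exact Dvd.dvd.mul_left (hcoh 1) _
  have hd3 : (p:ℤ) ∣ lam 0 * (lam 0 - 1) := by
    have he : lam 0 * (lam 0 - 1) = (lam 0 * lam 1 - lam 0) - (lam 0 * lam 1 - lam 0 * lam 0) := by
      ring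
    rw [he]
    exact dvd_sub hd1 hd2
  have hpZ : Prime (p:ℤ) := Int.prime_iff_natAbs_prime.mpr (by simpa using hp)
  rcases hpZ.dvd_mul.mp hd3 with hcase | hcase
  · left
    have hdvd : ∀ m, (p:ℤ) ∣ lam m := fun m => by
      have he : lam m = lam 0 + (lam m - lam 0) := by ring
      rw [he]; exact dvd_add hcase (hcoh m)
    have hB := endgame x z hnil hzc hrel hindep hgen hexp A B hcomm a b ha hb hab lam hlam hdvd
    rw [hB, inf_top_eq] at hmeet
    exact hmeet
  · right
    have hdvd : ∀ m, (p:ℤ) ∣ 1 - lam m := fun m => by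
      have he : 1 - lam m = -(lam 0 - 1) + -(lam m - lam 0) := by ring
      rw [he]; exact dvd_add (dvd_neg.mpr hcase) (dvd_neg.mpr (hcoh m))
    have hcomm2 : ∀ b2 ∈ B, ∀ a2 ∈ A, b2 * a2 = a2 * b2 := fun b2 hb2 a2 ha2 =>
      (hcomm a2 ha2 b2 hb2).symm
    have hab2 : ∀ m, x m = b m * a m := fun m => by
      rw [hab m, hcomm _ (ha m) _ (hb m)]
    have hA := endgame x z hnil hzc hrel hindep hgen hexp B A hcomm2 b a hb ha hab2
      (fun m => 1 - lam m) hblam hdvd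
    rw [hA, top_inf_eq] at hmeet
    exact hmeet
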